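/- arXiv:1603.07310 — 2 statements merged into one kernel-verified Lean document; each statement's English description precedes it below -/
import Mathlib

section
/- Let L ≥ 1, let U ⊂ I² be a closed ball, let (φ_k) be a sequence of L-bi-Lipschitz maps φ_k : I² → ℝ² converging uniformly to a map φ : I² → ℝ². Then for every ε > 0 there exists a positive integer k₀ such that for all k ≥ k₀: (i) φ_k(U) ⊆ V_ε^{ext}(φ(U)), and (ii) V_ε^{int}(φ(U)) ⊆ φ_k(U), where V_ε^{ext}(φ(U)) := {x ∈ ℝ² : d(x, φ(U)) < ε} and V_ε^{int}(φ(U)) := {x ∈ φ(U) : d(x, ∂φ(U)) > ε}. -/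
open MeasureTheory Set Filter Topology Metric

noncomputable section

/-- Telescoping product for nonvanishing complex sequences. -/
lemma tele_prod (a : ℕ → ℂ) : ∀ N : ℕ, (∀ j, j ≤ N → a j ≠ 0) →
    a 0 * ∏ j ∈ Finset.range N, (a (j + 1) / a j) = a N := by
  intro N
  induction N with
  | zero => simp
  | succ n ih =>
    intro h
    rw [Finset.prod_range_succ, ← mul_assoc, ih (fun j hj => h j (hj.trans n.le_succ))]
    field_simp [h n n.le_succ]

/-- Existence of a continuous logarithm for a nonvanishing continuous function on a
compact convex set. -/
lemma exists_lift {E : Type*} [NormedAddCommGroup E] [NormedSpace ℝ E]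
    (C : Set E) (hconv : Convex ℝ C) (hcomp : IsCompact C)
    (f : E → ℂ) (hf : ContinuousOn f C) (h0 : ∀ x ∈ C, f x ≠ 0) :
    ∃ ℓ : E → ℂ, ContinuousOn ℓ C ∧ ∀ x ∈ C, Complex.exp (ℓ x) = f x := by
  rcases C.eq_empty_or_nonempty with hC | ⟨x₀, hx₀⟩
  · exact ⟨0, continuousOn_const, by simp [hC]⟩
  obtain ⟨xm, hxm, hmin⟩ := hcomp.exists_isMinOn ⟨x₀, hx₀⟩ hf.norm
  set m : ℝ := ‖f xm‖ with hm_def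
  have hm : 0 < m := norm_pos_iff.2 (h0 xm hxm)
  have huc := hcomp.uniformContinuousOn_of_continuous hf
  rw [Metric.uniformContinuousOn_iff] at huc
  obtain ⟨δ, hδ, hδ'⟩ := huc m hm
  obtain ⟨n, hn⟩ := exists_nat_gt (Metric.diam C / δ)
  set N : ℕ := n + 1 with hN_def
  have hNpos : 0 < (N : ℝ) := by positivity
  have hDN : Metric.diam C / (N : ℝ) < δ := by
    rw [div_lt_iff₀ hNpos]
    rw [div_lt_iff₀ hδ] at hn
    have : (n : ℝ) ≤ N := by exact_mod_cast n.le_succ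
    nlinarith [Metric.diam_nonneg (s := C)]
  set p : ℕ → E → E := fun j x => x₀ + ((j : ℝ) / N) • (x - x₀) with hp_def
  have hpC : ∀ j, j ≤ N → ∀ x ∈ C, p j x ∈ C := by
    intro j hj x hx
    have hj1 : (j : ℝ) / N ≤ 1 := by
      rw [div_le_one hNpos]; exact_mod_cast hj
    have hj0 : (0 : ℝ) ≤ (j : ℝ) / N := by positivity
    have heq : p j x = (1 - (j : ℝ) / N) • x₀ + ((j : ℝ) / N) • x := by
      simp only [hp_def]; module
    rw [heq]
    exact hconv hx₀ hx (by linarith) hj0 (by ring)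
  have hpdist : ∀ j, ∀ x ∈ C, dist (p (j + 1) x) (p j x) < δ := by
    intro j x hx
    have : p (j + 1) x - p j x = ((1 : ℝ) / N) • (x - x₀) := by
      simp only [hp_def]; push_cast; module
    rw [dist_eq_norm, this, norm_smul]
    have hxd : ‖x - x₀‖ ≤ Metric.diam C := by
      rw [← dist_eq_norm]
      exact Metric.dist_le_diam_of_mem hcomp.isBounded hx hx₀
    calc ‖(1 : ℝ) / (N : ℝ)‖ * ‖x - x₀‖ ≤ (1 / N) * Metric.diam C := by
          rw [Real.norm_eq_abs, abs_of_pos (by positivity)]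
          exact mul_le_mul_of_nonneg_left hxd (by positivity)
      _ = Metric.diam C / N := by ring
      _ < δ := hDN
  have hfne : ∀ j, j ≤ N → ∀ x ∈ C, f (p j x) ≠ 0 := fun j hj x hx => h0 _ (hpC j hj x hx)
  have hfm : ∀ j, j ≤ N → ∀ x ∈ C, m ≤ ‖f (p j x)‖ := fun j hj x hx => hmin (hpC j hj x hx)
  have hratio : ∀ j, j < N → ∀ x ∈ C,
      ‖f (p (j + 1) x) / f (p j x) - 1‖ < 1 := by
    intro j hj x hx
    have h1 : dist (f (p (j + 1) x)) (f (p j x)) < m :=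
      hδ' _ (hpC (j+1) hj x hx) _ (hpC j hj.le x hx) (hpdist j x hx)
    have h2 : m ≤ ‖f (p j x)‖ := hfm j hj.le x hx
    have h3 : f (p j x) ≠ 0 := hfne j hj.le x hx
    have : f (p (j + 1) x) / f (p j x) - 1 = (f (p (j+1) x) - f (p j x)) / f (p j x) := by
      field_simp
    rw [this, norm_div, div_lt_one (lt_of_lt_of_le hm h2)]
    calc ‖f (p (j+1) x) - f (p j x)‖ = dist (f (p (j+1) x)) (f (p j x)) := by
          rw [Complex.dist_eq]
      _ < m := h1
      _ ≤ ‖f (p j x)‖ := h2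
  have hslit : ∀ j, j < N → ∀ x ∈ C,
      f (p (j + 1) x) / f (p j x) ∈ Complex.slitPlane := by
    intro j hj x hx
    set w := f (p (j + 1) x) / f (p j x)
    have h1 : ‖w - 1‖ < 1 := hratio j hj x hx
    rw [Complex.mem_slitPlane_iff]
    left
    have h2 : |(w - 1).re| ≤ ‖w - 1‖ := Complex.abs_re_le_norm _
    have : w.re = 1 + (w - 1).re := by simp
    rw [this]
    have h4 := abs_lt.1 (lt_of_le_of_lt h2 h1)
    linarith [h4.1]
  refine ⟨fun x => Complex.log (f x₀) +
    ∑ j ∈ Finset.range N, Complex.log (f (p (j + 1) x) / f (p j x)), ?_, ?_⟩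
  · apply ContinuousOn.add continuousOn_const
    apply continuousOn_finset_sum
    intro j hj
    rw [Finset.mem_range] at hj
    have hpc : ∀ i, i ≤ N → ContinuousOn (fun x => f (p i x)) C := by
      intro i hi
      apply hf.comp
      · exact (continuous_const.add ((continuous_id.sub continuous_const).const_smul
          ((i : ℝ) / N))).continuousOn
      · exact fun x hx => hpC i hi x hx
    exact ((hpc (j+1) hj).div (hpc j hj.le)
      (fun x hx => hfne j hj.le x hx)).clog (fun x hx => hslit j hj x hx)
  · intro x hx
    rw [Complex.exp_add, Complex.exp_sum, Complex.exp_log (h0 x₀ hx₀)]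
    have : ∀ j ∈ Finset.range N, Complex.exp (Complex.log (f (p (j+1) x) / f (p j x)))
        = f (p (j+1) x) / f (p j x) := by
      intro j hj
      rw [Finset.mem_range] at hj
      exact Complex.exp_log (div_ne_zero (hfne (j+1) hj x hx) (hfne j hj.le x hx))
    rw [Finset.prod_congr rfl this]
    have h00 : f x₀ = (fun j => f (p j x)) 0 := by simp [hp_def]
    rw [h00, tele_prod _ N (fun j hj => hfne j hj x hx)]
    have : p N x = x := by
      simp only [hp_def]
      rw [div_self (ne_of_gt hNpos), one_smul]
      abel
    rw [this]

/-- A continuous function on an interval whose exponential is constantly `1`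
has equal values at the endpoints. -/
lemma lift_const {a b : ℝ} (hab : a ≤ b) (g : ℝ → ℂ) (hg : ContinuousOn g (Icc a b))
    (h1 : ∀ t ∈ Icc a b, Complex.exp (g t) = 1) : g b = g a := by
  have hmem : ∀ t ∈ Icc a b, ∃ k : ℤ, g t = k * (2 * Real.pi * Complex.I) := by
    intro t ht
    exact Complex.exp_eq_one_iff.1 (h1 t ht)
  obtain ⟨ka, hka⟩ := hmem a ⟨le_refl a, hab⟩
  obtain ⟨kb, hkb⟩ := hmem b ⟨hab, le_refl b⟩
  have hq : ∀ t ∈ Icc a b, ∃ k : ℤ, (g t).im = k * (2 * Real.pi) := by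
    intro t ht
    obtain ⟨k, hk⟩ := hmem t ht
    exact ⟨k, by rw [hk]; simp⟩
  have hqa : (g a).im = ka * (2 * Real.pi) := by rw [hka]; simp
  have hqb : (g b).im = kb * (2 * Real.pi) := by rw [hkb]; simp
  have hgim : ContinuousOn (fun t => (g t).im) (Icc a b) :=
    Complex.continuous_im.comp_continuousOn hg
  have hkey : ka = kb := by
    by_contra hne
    have hpi := Real.pi_pos
    rcases lt_or_gt_of_ne hne with h | h
    · -- ka < kb, use IVT to find value (ka + 1/2) * 2π
      have hval : ((ka : ℝ) + 1/2) * (2 * Real.pi) ∈ Icc ((g a).im) ((g b).im) := by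
        rw [hqa, hqb]
        constructor
        · nlinarith
        · have : (ka : ℝ) + 1 ≤ kb := by exact_mod_cast h
          nlinarith
      obtain ⟨t, ht, hgt⟩ := intermediate_value_Icc hab hgim hval
      obtain ⟨k, hk⟩ := hq t ht
      change (g t).im = _ at hgt
      rw [hgt] at hk
      have : (2 * ka + 1 : ℝ) = 2 * k := by nlinarith
      have : (2 * ka + 1 : ℤ) = 2 * k := by exact_mod_cast this
      omega
    · have hval : ((kb : ℝ) + 1/2) * (2 * Real.pi) ∈ Icc ((g b).im) ((g a).im) := by
        rw [hqa, hqb]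
        constructor
        · nlinarith
        · have : (kb : ℝ) + 1 ≤ ka := by exact_mod_cast h
          nlinarith
      obtain ⟨t, ht, hgt⟩ := intermediate_value_Icc' hab hgim hval
      obtain ⟨k, hk⟩ := hq t ht
      change (g t).im = _ at hgt
      rw [hgt] at hk
      have : (2 * kb + 1 : ℝ) = 2 * k := by nlinarith
      have : (2 * kb + 1 : ℤ) = 2 * k := by exact_mod_cast this
      omega
  rw [hka, hkb, hkey]

/-- The loop `γ` (defined on `[0,1]`) has a continuous logarithm whose endpoint
difference (the "defect", `2πi` times the winding number) is `d`. -/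
def HasDefect (γ : ℝ → ℂ) (d : ℂ) : Prop :=
  ∃ ℓ : ℝ → ℂ, ContinuousOn ℓ (Icc 0 1) ∧
    (∀ t ∈ Icc (0:ℝ) 1, Complex.exp (ℓ t) = γ t) ∧ ℓ 1 - ℓ 0 = d

lemma HasDefect.congr {γ γ' : ℝ → ℂ} {d : ℂ} (h : HasDefect γ d)
    (he : ∀ t ∈ Icc (0:ℝ) 1, γ t = γ' t) : HasDefect γ' d := by
  obtain ⟨ℓ, hc, hexp, hd⟩ := h
  exact ⟨ℓ, hc, fun t ht => (hexp t ht).trans (he t ht), hd⟩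

lemma HasDefect.unique {γ : ℝ → ℂ} {d d' : ℂ} (h : HasDefect γ d) (h' : HasDefect γ d') :
    d = d' := by
  obtain ⟨ℓ, hc, hexp, hd⟩ := h
  obtain ⟨ℓ', hc', hexp', hd'⟩ := h'
  have key : (ℓ - ℓ') 1 = (ℓ - ℓ') 0 := by
    apply lift_const zero_le_one _ (hc.sub hc')
    intro t ht
    have h1 : Complex.exp (ℓ t) = γ t := hexp t ht
    have h2 : Complex.exp (ℓ' t) = γ t := hexp' t ht
    have hγ : γ t ≠ 0 := h1 ▸ Complex.exp_ne_zero _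
    simp only [Pi.sub_apply, Complex.exp_sub, h1, h2, div_self hγ]
  simp only [Pi.sub_apply] at key
  rw [← hd, ← hd']
  linear_combination key

lemma hasDefect_exists {γ : ℝ → ℂ} (hc : ContinuousOn γ (Icc 0 1))
    (h0 : ∀ t ∈ Icc (0:ℝ) 1, γ t ≠ 0) : ∃ d, HasDefect γ d := by
  obtain ⟨ℓ, hℓc, hℓe⟩ := exists_lift (Icc (0:ℝ) 1) (convex_Icc 0 1) isCompact_Icc γ hc h0
  exact ⟨ℓ 1 - ℓ 0, ℓ, hℓc, hℓe, rfl⟩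

/-- Homotopy invariance of the defect. -/
lemma HasDefect.transfer (H : ℝ → ℝ → ℂ)
    (hc : ContinuousOn (fun p : ℝ × ℝ => H p.1 p.2) (Icc 0 1 ×ˢ Icc 0 1))
    (h0 : ∀ τ ∈ Icc (0:ℝ) 1, ∀ t ∈ Icc (0:ℝ) 1, H τ t ≠ 0)
    (hloop : ∀ τ ∈ Icc (0:ℝ) 1, H τ 1 = H τ 0)
    {d : ℂ} (hd : HasDefect (H 0) d) : HasDefect (H 1) d := by
  obtain ⟨L, hLc, hLe⟩ := exists_lift (Icc (0:ℝ) 1 ×ˢ Icc (0:ℝ) 1)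
    ((convex_Icc 0 1).prod (convex_Icc 0 1)) (isCompact_Icc.prod isCompact_Icc)
    (fun p => H p.1 p.2) hc (fun p hp => h0 p.1 hp.1 p.2 hp.2)
  have h01 : (0:ℝ) ∈ Icc (0:ℝ) 1 := ⟨le_refl 0, zero_le_one⟩
  have h11 : (1:ℝ) ∈ Icc (0:ℝ) 1 := ⟨zero_le_one, le_refl 1⟩
  have hedge : ∀ τ ∈ Icc (0:ℝ) 1, ∀ c : ℝ, c ∈ Icc (0:ℝ) 1 →
      ContinuousOn (fun s => L (τ, s)) (Icc 0 1) := by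
    intro τ hτ c _
    exact hLc.comp (Continuous.continuousOn (by continuity)) (fun s hs => ⟨hτ, hs⟩)
  -- defect of H 0 via the 0-edge
  have hd0 : HasDefect (H 0) (L (0, 1) - L (0, 0)) :=
    ⟨fun s => L (0, s), hedge 0 h01 0 h01, fun t ht => hLe (0, t) ⟨h01, ht⟩, rfl⟩
  have hdeq : d = L (0, 1) - L (0, 0) := hd.unique hd0
  -- the vertical defect function is constant
  have hδ : (fun τ => L (τ, 1) - L (τ, 0)) 1 = (fun τ => L (τ, 1) - L (τ, 0)) 0 := by
    refine lift_const zero_le_one (fun τ => L (τ, 1) - L (τ, 0)) ?_ ?_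
    · apply ContinuousOn.sub
      · exact hLc.comp (Continuous.continuousOn (by continuity)) (fun τ hτ => ⟨hτ, h11⟩)
      · exact hLc.comp (Continuous.continuousOn (by continuity)) (fun τ hτ => ⟨hτ, h01⟩)
    · intro τ hτ
      rw [Complex.exp_sub, hLe (τ, 1) ⟨hτ, h11⟩, hLe (τ, 0) ⟨hτ, h01⟩]
      simp only
      rw [hloop τ hτ, div_self (h0 τ hτ 0 h01)]
  refine ⟨fun s => L (1, s), hedge 1 h11 0 h01, fun t ht => hLe (1, t) ⟨h11, ht⟩, ?_⟩
  simp only at hδ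
  rw [hδ, hdeq]

/-- The defect of an odd loop is nonzero (Borsuk). -/
lemma HasDefect.ne_zero_of_odd {γ : ℝ → ℂ} {d : ℂ}
    (hodd : ∀ t ∈ Icc (0:ℝ) (1/2), γ (t + 1/2) = -γ t)
    (hd : HasDefect γ d) : d ≠ 0 := by
  obtain ⟨ℓ, hc, hexp, hdd⟩ := hd
  have hsub : Icc (0:ℝ) (1/2) ⊆ Icc 0 1 := Icc_subset_Icc (le_refl 0) (by norm_num)
  have hmem : ∀ t ∈ Icc (0:ℝ) (1/2), t + 1/2 ∈ Icc (0:ℝ) 1 := by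
    intro t ht; exact ⟨by linarith [ht.1], by linarith [ht.2]⟩
  set ρ : ℝ → ℂ := fun t => ℓ (t + 1/2) - ℓ t - Real.pi * Complex.I with hρ_def
  have hρc : ContinuousOn ρ (Icc 0 (1/2)) := by
    apply ContinuousOn.sub _ continuousOn_const
    apply ContinuousOn.sub
    · exact hc.comp (Continuous.continuousOn (by continuity)) hmem
    · exact hc.mono hsub
  have hρe : ∀ t ∈ Icc (0:ℝ) (1/2), Complex.exp (ρ t) = 1 := by
    intro t ht
    have h1 : Complex.exp (ℓ (t + 1/2)) = γ (t + 1/2) := hexp _ (hmem t ht)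
    have h2 : Complex.exp (ℓ t) = γ t := hexp t (hsub ht)
    have hγ : γ t ≠ 0 := h2 ▸ Complex.exp_ne_zero _
    simp only [hρ_def, Complex.exp_sub, h1, h2, hodd t ht, Complex.exp_pi_mul_I]
    field_simp
  have hρconst : ρ (1/2) = ρ 0 := lift_const (by norm_num) ρ hρc hρe
  intro hd0
  rw [hd0] at hdd
  -- ℓ 1 = ℓ 0, and ℓ 1 - ℓ (1/2) = ℓ (1/2) - ℓ 0
  have e1 : ℓ (1/2 + 1/2) - ℓ (1/2) - Real.pi * Complex.I = ℓ (0 + 1/2) - ℓ 0 - Real.pi * Complex.I := hρconst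
  norm_num at e1
  -- from hdd : ℓ 1 - ℓ 0 = 0 and e1 : ℓ 1 - ℓ (1/2) = ℓ (1/2) - ℓ 0
  have h2 : ℓ (1/2) = ℓ 0 := by linear_combination (hdd - e1) / 2
  have h4 := hρe 0 ⟨le_refl 0, by norm_num⟩
  simp only [hρ_def] at h4
  have h3 : (0:ℝ) + 1/2 = 1/2 := by norm_num
  rw [h3, h2, sub_self, zero_sub, Complex.exp_neg, Complex.exp_pi_mul_I] at h4
  norm_num at h4

lemma hasDefect_const {c : ℂ} (hc : c ≠ 0) : HasDefect (fun _ => c) 0 :=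
  ⟨fun _ => Complex.log c, continuousOn_const, fun t _ => Complex.exp_log hc, sub_self _⟩

/-! ### The loop parametrization of the unit sphere direction -/

def nuRaw (t : ℝ) : ℝ × ℝ := (Real.cos (2 * Real.pi * t), Real.sin (2 * Real.pi * t))

lemma nuRaw_ne_zero (t : ℝ) : nuRaw t ≠ 0 := by
  intro h
  rw [Prod.ext_iff] at h
  have := Real.sin_sq_add_cos_sq (2 * Real.pi * t)
  simp only [nuRaw] at h
  rw [h.1, h.2] at this
  norm_num at this

lemma nuRaw_norm_pos (t : ℝ) : 0 < ‖nuRaw t‖ := norm_pos_iff.2 (nuRaw_ne_zero t)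

def nu (t : ℝ) : ℝ × ℝ := ‖nuRaw t‖⁻¹ • nuRaw t

lemma nu_norm (t : ℝ) : ‖nu t‖ = 1 := by
  rw [nu, norm_smul, norm_inv, norm_norm]
  exact inv_mul_cancel₀ (nuRaw_norm_pos t).ne'

lemma nu_ne_zero (t : ℝ) : nu t ≠ 0 := by
  intro h
  have := nu_norm t
  rw [h] at this
  simp at this

lemma nuRaw_continuous : Continuous nuRaw := by
  unfold nuRaw; fun_prop

lemma nu_continuous : Continuous nu :=
  ((nuRaw_continuous.norm.inv₀ (fun t => (nuRaw_norm_pos t).ne')).smul nuRaw_continuous)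

lemma nuRaw_antipode (t : ℝ) : nuRaw (t + 1/2) = -nuRaw t := by
  have h : 2 * Real.pi * (t + 1/2) = 2 * Real.pi * t + Real.pi := by ring
  simp only [nuRaw, h, Real.cos_add_pi, Real.sin_add_pi]
  rfl

lemma nu_antipode (t : ℝ) : nu (t + 1/2) = -nu t := by
  rw [nu, nu, nuRaw_antipode, norm_neg, smul_neg]

lemma nu_loop : nu 1 = nu 0 := by
  have h1 : nuRaw 1 = nuRaw 0 := by
    simp [nuRaw, mul_one, mul_zero, Real.cos_two_pi, Real.sin_two_pi]
  rw [nu, nu, h1]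

/-! ### Identification of `ℝ × ℝ` with `ℂ` -/

def toC (p : ℝ × ℝ) : ℂ := ⟨p.1, p.2⟩

lemma toC_sub (a b : ℝ × ℝ) : toC (a - b) = toC a - toC b := by
  simp [toC, Complex.ext_iff]

lemma toC_eq_zero {p : ℝ × ℝ} : toC p = 0 ↔ p = 0 := by
  simp [toC, Complex.ext_iff, Prod.ext_iff]

lemma toC_neg (a : ℝ × ℝ) : toC (-a) = -toC a := by
  simp [toC, Complex.ext_iff]

lemma toC_continuous : Continuous toC := by
  have : toC = fun p : ℝ × ℝ => (p.1 : ℂ) + (p.2 : ℂ) * Complex.I := by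
    funext p
    simp [toC, Complex.ext_iff]
  rw [this]
  fun_prop

lemma toC_sub_ne_zero {a b : ℝ × ℝ} (h : a ≠ b) : toC (a - b) ≠ 0 := by
  rw [Ne, toC_eq_zero, sub_eq_zero]
  exact h

lemma norm_le_abs_toC (p : ℝ × ℝ) : ‖p‖ ≤ ‖toC p‖ := by
  rw [Prod.norm_def]
  apply max_le
  · simpa [toC] using Complex.abs_re_le_norm (toC p)
  · simpa [toC] using Complex.abs_im_le_norm (toC p)

lemma abs_toC_le (p : ℝ × ℝ) : ‖toC p‖ ≤ 2 * ‖p‖ := by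
  calc ‖toC p‖ ≤ |(toC p).re| + |(toC p).im| := Complex.norm_le_abs_re_add_abs_im _
    _ ≤ ‖p‖ + ‖p‖ := by
        rw [Prod.norm_def]
        gcongr
        · simp only [toC]
          exact (le_max_left _ _).trans_eq' (by simp [Real.norm_eq_abs])
        · simp only [toC]
          exact (le_max_right _ _).trans_eq' (by simp [Real.norm_eq_abs])
    _ = 2 * ‖p‖ := by ring

/-- The core degree-theoretic statement: if `h` is continuous and injective on a closed
ball and `g` is continuous and pointwise closer to `h` on the sphere than `h u` is
(up to the norm-comparison factor 2), then `h u` is in the image of `g`. -/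
theorem core_surj (z : ℝ × ℝ) (r : ℝ) (hr : 0 < r) (h g : ℝ × ℝ → ℝ × ℝ)
    (hhc : ContinuousOn h (closedBall z r)) (hinj : Set.InjOn h (closedBall z r))
    (hgc : ContinuousOn g (closedBall z r))
    (u : ℝ × ℝ) (hu : u ∈ ball z r)
    (hclose : ∀ s ∈ sphere z r, 2 * dist (g s) (h s) < dist (h u) (h s)) :
    h u ∈ g '' closedBall z r := by
  by_contra hcon
  have hg0 : ∀ x ∈ closedBall z r, g x ≠ h u := fun x hx heq => hcon ⟨x, hx, heq⟩
  set d0 := dist u z with hd0_def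
  have hdlt : d0 < r := mem_ball.1 hu
  have hd0nn : 0 ≤ d0 := dist_nonneg
  set r' := (r - d0) / 2 with hr'_def
  have hr'pos : 0 < r' := by rw [hr'_def]; linarith
  have huz : ‖u - z‖ = d0 := by rw [← dist_eq_norm]
  have uU : u ∈ closedBall z r := ball_subset_closedBall hu
  -- membership helper
  have memU : ∀ (c : ℝ × ℝ) (ρ : ℝ), ‖c - z‖ + |ρ| ≤ r → ∀ t, c + ρ • nu t ∈ closedBall z r := by
    intro c ρ hb t
    rw [mem_closedBall, dist_eq_norm]
    have e : c + ρ • nu t - z = (c - z) + ρ • nu t := by abel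
    rw [e]
    calc ‖(c - z) + ρ • nu t‖ ≤ ‖c - z‖ + ‖ρ • nu t‖ := norm_add_le _ _
      _ = ‖c - z‖ + |ρ| := by rw [norm_smul, Real.norm_eq_abs, nu_norm, mul_one]
      _ ≤ r := hb
  have mem1 : ∀ t, u + r' • nu t ∈ closedBall z r := by
    intro t
    apply memU
    rw [huz, abs_of_pos hr'pos, hr'_def]
    linarith
  have hne_of : ∀ a b, a ∈ closedBall z r → b ∈ closedBall z r → a ≠ b →
      toC (h a - h b) ≠ 0 :=
    fun a b ha hb hab => toC_sub_ne_zero (fun heq => hab (hinj ha hb heq))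
  have hsq : ∀ p : ℝ × ℝ, p ∈ (Icc (0:ℝ) 1 ×ˢ Icc (0:ℝ) 1) →
      p.1 ∈ Icc (0:ℝ) 1 ∧ p.2 ∈ Icc (0:ℝ) 1 := fun p hp => ⟨hp.1, hp.2⟩
  -- the four loops
  set L0 : ℝ → ℂ := fun t => toC (h (u + r' • nu t) - h u) with hL0_def
  set Lodd : ℝ → ℂ := fun t => toC (h (u + r' • nu t) - h (u - r' • nu t)) with hLodd_def
  set Lout : ℝ → ℂ := fun t => toC (h (z + r • nu t) - h u) with hLout_def
  set Lg : ℝ → ℂ := fun t => toC (g (z + r • nu t) - h u) with hLg_def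
  have memS : ∀ t, z + r • nu t ∈ sphere z r := by
    intro t
    rw [mem_sphere, dist_eq_norm]
    have e : z + r • nu t - z = r • nu t := by abel
    rw [e, norm_smul, Real.norm_eq_abs, nu_norm, mul_one, abs_of_pos hr]
  have memSU : ∀ t, z + r • nu t ∈ closedBall z r :=
    fun t => sphere_subset_closedBall (memS t)
  -- continuity of inner circles
  have cont_circ : ∀ (c : ℝ × ℝ) (ρ : ℝ), Continuous (fun t : ℝ => c + ρ • nu t) :=
    fun c ρ => continuous_const.add ((nu_continuous).const_smul ρ)
  -- initial defect
  obtain ⟨d, hd_L0⟩ : ∃ d, HasDefect L0 d := by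
    apply hasDefect_exists
    · apply toC_continuous.comp_continuousOn
      apply ContinuousOn.sub _ continuousOn_const
      exact hhc.comp (cont_circ u r').continuousOn (fun t _ => mem1 t)
    · intro t _
      apply hne_of _ _ (mem1 t) uU
      intro heq
      have : r' • nu t = 0 := by
        have := add_eq_left.1 heq
        exact this
      exact (smul_ne_zero hr'pos.ne' (nu_ne_zero t)) this
  -- Stage A : homotopy to the odd loop
  have hTA : HasDefect Lodd d := by
    have memA : ∀ τ ∈ Icc (0:ℝ) 1, ∀ t : ℝ, u - (τ * r') • nu t ∈ closedBall z r := by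
      intro τ hτ t
      have e : u - (τ * r') • nu t = u + (-(τ * r')) • nu t := by
        rw [neg_smul]; abel
      rw [e]
      apply memU
      rw [huz, abs_neg, abs_of_nonneg (by nlinarith [hτ.1, hτ.2] : (0:ℝ) ≤ τ * r')]
      nlinarith [hτ.1, hτ.2]
    have hA := HasDefect.transfer
      (fun τ t => toC (h (u + r' • nu t) - h (u - (τ * r') • nu t)))
      (by
        apply toC_continuous.comp_continuousOn
        apply ContinuousOn.sub
        · exact hhc.comp ((cont_circ u r').comp continuous_snd).continuousOn
            (fun p _ => mem1 p.2)
        · refine hhc.comp ?_ (fun p hp => memA p.1 (hsq p hp).1 p.2)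
          exact (continuous_const.sub ((continuous_fst.mul continuous_const).smul
            (nu_continuous.comp continuous_snd))).continuousOn)
      (by
        intro τ hτ t _
        apply hne_of _ _ (mem1 t) (memA τ hτ t)
        intro heq
        have e2 : (r' + τ * r') • nu t = 0 := by
          have : u + r' • nu t - (u - (τ * r') • nu t) = (r' + τ * r') • nu t := by
            rw [add_smul]; abel
          rw [← this, heq, sub_self]
        have : r' + τ * r' ≠ 0 := by nlinarith [hτ.1, hτ.2]
        exact (smul_ne_zero this (nu_ne_zero t)) e2)
      (by intro τ _; beta_reduce; rw [nu_loop])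
      (d := d)
      (by
        apply hd_L0.congr
        intro t _
        simp only [zero_mul, zero_smul, sub_zero, hL0_def])
    apply hA.congr
    intro t _
    simp only [one_mul, hLodd_def]
  -- the odd loop has nonzero defect
  have hdne : d ≠ 0 := by
    apply hTA.ne_zero_of_odd
    intro t _
    simp only [hLodd_def]
    rw [nu_antipode, smul_neg]
    rw [show u + -(r' • nu t) = u - r' • nu t by abel,
        show u - -(r' • nu t) = u + r' • nu t by abel]
    rw [← neg_sub (h (u + r' • nu t)) (h (u - r' • nu t)), toC_neg]
  -- Stage B : homotopy from L0 to the outer loop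
  have hTB : HasDefect Lout d := by
    have memB : ∀ τ ∈ Icc (0:ℝ) 1, ∀ t : ℝ,
        (u + τ • (z - u)) + (r' + τ * (r - r')) • nu t ∈ closedBall z r := by
      intro τ hτ t
      apply memU
      have e : u + τ • (z - u) - z = (1 - τ) • (u - z) := by module
      rw [e, norm_smul, Real.norm_eq_abs, huz, abs_of_nonneg (by linarith [hτ.2] : (0:ℝ) ≤ 1 - τ),
        abs_of_nonneg (by nlinarith [hτ.1, hτ.2, hr'pos.le] : (0:ℝ) ≤ r' + τ * (r - r'))]
      rw [hr'_def]
      nlinarith [hτ.1, hτ.2]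
    have hptne : ∀ τ ∈ Icc (0:ℝ) 1, ∀ t : ℝ,
        (u + τ • (z - u)) + (r' + τ * (r - r')) • nu t ≠ u := by
      intro τ hτ t heq
      set A := τ • (z - u) with hA
      set B := (r' + τ * (r - r')) • nu t with hB
      have hAB : A + B = 0 := by
        have : u + τ • (z - u) + (r' + τ * (r - r')) • nu t - u = A + B := by
          rw [hA, hB]; abel
        rw [← this, heq, sub_self]
      have hnB : ‖B‖ = r' + τ * (r - r') := by
        rw [hB, norm_smul, Real.norm_eq_abs, nu_norm, mul_one,
          abs_of_nonneg (by nlinarith [hτ.1, hτ.2, hr'pos.le] : (0:ℝ) ≤ r' + τ * (r - r'))]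
      have hnA : ‖A‖ ≤ τ * d0 := by
        rw [hA, norm_smul, Real.norm_eq_abs, abs_of_nonneg hτ.1, norm_sub_rev, huz]
      have hBA : B = -A := by linear_combination hAB
      rw [hBA, norm_neg] at hnB
      have : r' + τ * (r - r') ≤ τ * d0 := hnB ▸ hnA
      rw [hr'_def] at this
      nlinarith [hτ.1, hτ.2]
    have hB := HasDefect.transfer
      (fun τ t => toC (h ((u + τ • (z - u)) + (r' + τ * (r - r')) • nu t) - h u))
      (by
        apply toC_continuous.comp_continuousOn
        apply ContinuousOn.sub _ continuousOn_const
        refine hhc.comp ?_ (fun p hp => memB p.1 (hsq p hp).1 p.2)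
        apply Continuous.continuousOn
        apply Continuous.add
        · exact continuous_const.add (continuous_fst.smul continuous_const)
        · exact ((continuous_const.add (continuous_fst.mul continuous_const)).smul
            (nu_continuous.comp continuous_snd)))
      (by
        intro τ hτ t _
        exact hne_of _ _ (memB τ hτ t) uU (hptne τ hτ t))
      (by intro τ _; beta_reduce; rw [nu_loop])
      (d := d)
      (by
        apply hd_L0.congr
        intro t _
        simp only [zero_smul, add_zero, zero_mul, hL0_def])
    apply hB.congr
    intro t _
    beta_reduce
    have h1 : u + (1:ℝ) • (z - u) = z := by module
    have h2 : r' + 1 * (r - r') = r := by ring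
    rw [h1, h2, hLout_def]
  -- Stage C : straight-line homotopy from Lout to Lg
  have hTC : HasDefect Lg d := by
    have c1 : ContinuousOn (fun p : ℝ × ℝ => toC (h (z + r • nu p.2) - h u))
        (Icc 0 1 ×ˢ Icc 0 1) := by
      apply toC_continuous.comp_continuousOn
      apply ContinuousOn.sub _ continuousOn_const
      exact hhc.comp ((cont_circ z r).comp continuous_snd).continuousOn (fun p _ => memSU p.2)
    have c2 : ContinuousOn (fun p : ℝ × ℝ => toC (g (z + r • nu p.2) - h u))
        (Icc 0 1 ×ˢ Icc 0 1) := by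
      apply toC_continuous.comp_continuousOn
      apply ContinuousOn.sub _ continuousOn_const
      exact hgc.comp ((cont_circ z r).comp continuous_snd).continuousOn (fun p _ => memSU p.2)
    have hC := HasDefect.transfer
      (fun τ t => toC (h (z + r • nu t) - h u) +
        (τ : ℂ) * (toC (g (z + r • nu t) - h u) - toC (h (z + r • nu t) - h u)))
      (by
        apply ContinuousOn.add c1
        exact ((Complex.continuous_ofReal.comp continuous_fst).continuousOn).mul (c2.sub c1))
      (by
        intro τ hτ t _ heq
        beta_reduce at heq
        set s := z + r • nu t with hs
        have hBdiff : toC (g s - h u) - toC (h s - h u) = toC (g s - h s) := by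
          rw [← toC_sub]; congr 1; abel
        rw [hBdiff] at heq
        have hA0 : toC (h s - h u) = -((τ:ℂ) * toC (g s - h s)) := by
          linear_combination heq
        have habs1 : ‖(τ:ℂ) * toC (g s - h s)‖ ≤ ‖toC (g s - h s)‖ := by
          rw [norm_mul, Complex.norm_real, Real.norm_eq_abs, abs_of_nonneg hτ.1]
          nlinarith [hτ.2, norm_nonneg (toC (g s - h s))]
        have habs2 : ‖toC (g s - h s)‖ < ‖toC (h s - h u)‖ := by
          calc ‖toC (g s - h s)‖ ≤ 2 * ‖g s - h s‖ := abs_toC_le _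
            _ = 2 * dist (g s) (h s) := by rw [dist_eq_norm]
            _ < dist (h u) (h s) := hclose s (memS t)
            _ = ‖h u - h s‖ := dist_eq_norm _ _
            _ ≤ ‖toC (h u - h s)‖ := norm_le_abs_toC _
            _ = ‖toC (h s - h u)‖ := by
                rw [show h u - h s = -(h s - h u) by abel, toC_neg, norm_neg]
        rw [hA0, norm_neg] at habs2
        exact absurd (habs1.trans_lt habs2) (lt_irrefl _))
      (by intro τ _; beta_reduce; rw [nu_loop])
      (d := d)
      (by
        apply hTB.congr
        intro t _
        simp only [Complex.ofReal_zero, zero_mul, add_zero, hLout_def])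
    apply hC.congr
    intro t _
    simp only [Complex.ofReal_one, one_mul, hLg_def]
    ring
  -- Stage D : contraction of Lg (possible since h u is not a value of g)
  have hTD : HasDefect Lg 0 := by
    have memD : ∀ τ ∈ Icc (0:ℝ) 1, ∀ t : ℝ, z + (τ * r) • nu t ∈ closedBall z r := by
      intro τ hτ t
      apply memU
      rw [sub_self, norm_zero, zero_add, abs_of_nonneg (by nlinarith [hτ.1, hr.le] : (0:ℝ) ≤ τ * r)]
      nlinarith [hτ.1, hτ.2]
    have hD := HasDefect.transfer
      (fun τ t => toC (g (z + (τ * r) • nu t) - h u))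
      (by
        apply toC_continuous.comp_continuousOn
        apply ContinuousOn.sub _ continuousOn_const
        refine hgc.comp ?_ (fun p hp => memD p.1 (hsq p hp).1 p.2)
        exact (continuous_const.add ((continuous_fst.mul continuous_const).smul
          (nu_continuous.comp continuous_snd))).continuousOn)
      (by
        intro τ hτ t _
        exact toC_sub_ne_zero (hg0 _ (memD τ hτ t)))
      (by intro τ _; beta_reduce; rw [nu_loop])
      (d := 0)
      (by
        apply (hasDefect_const (c := toC (g z - h u))
          (toC_sub_ne_zero (hg0 z (mem_closedBall_self hr.le)))).congr
        intro t _
        simp only [zero_mul, zero_smul, add_zero])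
    apply hD.congr
    intro t _
    simp only [one_mul, hLg_def]
  exact hdne (hTC.unique hTD)

/-- Openness: the image of a closed ball under a continuous injective map contains a
ball around the image of any interior point. -/
theorem exists_ball_subset_image (z : ℝ × ℝ) (r : ℝ) (hr : 0 < r) (h : ℝ × ℝ → ℝ × ℝ)
    (hhc : ContinuousOn h (closedBall z r)) (hinj : Set.InjOn h (closedBall z r))
    (u : ℝ × ℝ) (hu : u ∈ ball z r) :
    ∃ ρ > 0, ball (h u) ρ ⊆ h '' closedBall z r := by
  have hSne : (sphere z r).Nonempty := NormedSpace.sphere_nonempty.2 hr.le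
  have hScomp : IsCompact (h '' sphere z r) :=
    (isCompact_sphere z r).image_of_continuousOn (hhc.mono sphere_subset_closedBall)
  have hims : (h '' sphere z r).Nonempty := hSne.image h
  have hnotmem : h u ∉ h '' sphere z r := by
    rintro ⟨s, hs, heq⟩
    have hsu : s = u := hinj (sphere_subset_closedBall hs) (ball_subset_closedBall hu) heq
    rw [hsu] at hs
    exact absurd (mem_sphere.1 hs) (ne_of_lt (mem_ball.1 hu))
  set sep := infDist (h u) (h '' sphere z r) with hsep_def
  have hseppos : 0 < sep := by
    rcases eq_or_lt_of_le (infDist_nonneg : (0:ℝ) ≤ sep) with heq | hlt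
    · exfalso
      exact hnotmem ((hScomp.isClosed.mem_iff_infDist_zero hims).2 heq.symm)
    · exact hlt
  refine ⟨sep / 2, by positivity, ?_⟩
  intro w hw
  have hmain := core_surj z r hr h (fun x => h x + (h u - w)) hhc hinj
    (hhc.add continuousOn_const) u hu ?_
  · obtain ⟨x, hx, hxe⟩ := hmain
    refine ⟨x, hx, ?_⟩
    have : h x = h u - (h u - w) := eq_sub_of_add_eq hxe
    rw [this]; abel
  · intro s hs
    have h1 : dist (h s + (h u - w)) (h s) = dist (h u) w := by
      rw [dist_eq_norm, add_sub_cancel_left, ← dist_eq_norm]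
    rw [h1]
    have h2 : dist (h u) w < sep / 2 := by
      rw [dist_comm]; exact mem_ball.1 hw
    have h3 : sep ≤ dist (h u) (h s) := infDist_le_dist_of_mem ⟨s, hs, rfl⟩
    linarith

/-- For a map with a Lipschitz lower bound (hence with Lipschitz-continuous inverse),
the image of the sphere is contained in the frontier of the image of the closed ball. -/
theorem image_sphere_subset_frontier (L : ℝ) (hL : 0 < L) (z : ℝ × ℝ) (r : ℝ) (hr : 0 < r)
    (φ : ℝ × ℝ → ℝ × ℝ) (hc : ContinuousOn φ (closedBall z r))
    (hlow : ∀ x ∈ closedBall z r, ∀ y ∈ closedBall z r,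
      (1 / L) * dist x y ≤ dist (φ x) (φ y)) :
    ∀ s ∈ sphere z r, φ s ∈ frontier (φ '' closedBall z r) := by
  have hinj : Set.InjOn φ (closedBall z r) := by
    intro x hx y hy heq
    have h1 := hlow x hx y hy
    rw [heq, dist_self] at h1
    have : dist x y ≤ 0 := by
      have hL' : 0 < 1 / L := by positivity
      nlinarith
    exact dist_le_zero.1 this
  intro s hs
  have hsU : s ∈ closedBall z r := sphere_subset_closedBall hs
  have himmem : φ s ∈ φ '' closedBall z r := ⟨s, hsU, rfl⟩
  rw [frontier, Set.mem_diff]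
  refine ⟨subset_closure himmem, ?_⟩
  intro hint
  rw [mem_interior_iff_mem_nhds, Metric.mem_nhds_iff] at hint
  obtain ⟨ρ, hρpos, hball⟩ := hint
  set ψ := Function.invFunOn φ (closedBall z r) with hψ_def
  have hψ_eq : ∀ a ∈ φ '' closedBall z r, φ (ψ a) = a ∧ ψ a ∈ closedBall z r := by
    intro a ha
    obtain ⟨x, hx, rfl⟩ := ha
    exact ⟨Function.invFunOn_eq ⟨x, hx, rfl⟩, Function.invFunOn_mem ⟨x, hx, rfl⟩⟩
  have hsubim : closedBall (φ s) (ρ/2) ⊆ φ '' closedBall z r :=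
    (closedBall_subset_ball (by linarith)).trans hball
  have hψlip : LipschitzOnWith (Real.toNNReal L) ψ (φ '' closedBall z r) := by
    rw [lipschitzOnWith_iff_dist_le_mul]
    intro a ha b hb
    rw [Real.coe_toNNReal L hL.le]
    have h1 := hlow (ψ a) (hψ_eq a ha).2 (ψ b) (hψ_eq b hb).2
    rw [(hψ_eq a ha).1, (hψ_eq b hb).1] at h1
    calc dist (ψ a) (ψ b) = L * ((1/L) * dist (ψ a) (ψ b)) := by field_simp
      _ ≤ L * dist a b := mul_le_mul_of_nonneg_left h1 hL.le
  have hψc : ContinuousOn ψ (closedBall (φ s) (ρ/2)) :=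
    hψlip.continuousOn.mono hsubim
  have hψinj : Set.InjOn ψ (closedBall (φ s) (ρ/2)) := by
    intro a ha b hb heq
    rw [← (hψ_eq a (hsubim ha)).1, ← (hψ_eq b (hsubim hb)).1, heq]
  obtain ⟨ρ', hρ'pos, hρ'sub⟩ := exists_ball_subset_image (φ s) (ρ/2) (by positivity)
    ψ hψc hψinj (φ s) (mem_ball_self (by positivity))
  have hψs : ψ (φ s) = s := by
    apply hinj (hψ_eq _ himmem).2 hsU
    rw [(hψ_eq _ himmem).1]
  rw [hψs] at hρ'sub
  -- a point just outside the ball but within distance ρ' of s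
  set m := min (ρ'/2) r with hm_def
  have hmpos : 0 < m := lt_min (by positivity) hr
  have hmρ' : m < ρ' := (min_le_left _ _).trans_lt (by linarith)
  set s' := z + (1 + m / r) • (s - z) with hs'_def
  have hsz : ‖s - z‖ = r := by
    rw [← dist_eq_norm]; exact mem_sphere.1 hs
  have hd1 : dist s' s = m := by
    have e : s' - s = (m / r) • (s - z) := by rw [hs'_def]; module
    rw [dist_eq_norm, e, norm_smul, Real.norm_eq_abs, abs_of_pos (by positivity), hsz]
    field_simp
  have hs'mem : s' ∈ ball s ρ' := by
    rw [mem_ball, hd1]; exact hmρ'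
  obtain ⟨a, ha, has'⟩ := hρ'sub hs'mem
  have hs'U : s' ∈ closedBall z r := by
    rw [← has']; exact (hψ_eq a (hsubim ha)).2
  have hd2 : dist s' z = r + m := by
    have e : s' - z = (1 + m / r) • (s - z) := by rw [hs'_def]; abel
    rw [dist_eq_norm, e, norm_smul, Real.norm_eq_abs, abs_of_pos (by positivity), hsz]
    field_simp
  rw [mem_closedBall, hd2] at hs'U
  linarith

abbrev I2 : Set (ℝ × ℝ) := Set.Icc ((0, 0) : ℝ × ℝ) (1, 1)

def BiLipOn (L : ℝ) (f : ℝ × ℝ → ℝ × ℝ) (s : Set (ℝ × ℝ)) : Prop :=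
  ∀ x ∈ s, ∀ y ∈ s,
    (1 / L) * dist x y ≤ dist (f x) (f y) ∧ dist (f x) (f y) ≤ L * dist x y

/-- If `φ_k : I² → ℝ²` are `L`-bi-Lipschitz and converge uniformly to `φ`, then for
every `ε > 0` and all large `k`: (i) `φ_k(U) ⊆ V_ε^{ext}(φ(U))`, and
(ii) `V_ε^{int}(φ(U)) ⊆ φ_k(U)`, where `U ⊆ I²` is a closed ball,
`V_ε^{ext}(A) = {x : d(x, A) < ε}` and `V_ε^{int}(A) = {x ∈ A : d(x, ∂A) > ε}`. -/
theorem image_closedBall_convergence (L : ℝ) (hL : 1 ≤ L)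
    (z : ℝ × ℝ) (r : ℝ) (hr : 0 < r) (hU : Metric.closedBall z r ⊆ I2)
    (φk : ℕ → ℝ × ℝ → ℝ × ℝ) (φ : ℝ × ℝ → ℝ × ℝ)
    (hbilip : ∀ k, BiLipOn L (φk k) I2)
    (hconv : TendstoUniformlyOn φk φ atTop I2) :
    ∀ ε : ℝ, 0 < ε → ∃ k₀ : ℕ, ∀ k ≥ k₀,
      (φk k '' Metric.closedBall z r ⊆
        { x : ℝ × ℝ | infDist x (φ '' Metric.closedBall z r) < ε }) ∧
      ({ x ∈ φ '' Metric.closedBall z r |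
          ε < infDist x (frontier (φ '' Metric.closedBall z r)) } ⊆
        φk k '' Metric.closedBall z r) := by
  have hL0 : 0 < L := lt_of_lt_of_le one_pos hL
  -- continuity of the φk on I2
  have hkcont : ∀ k, ContinuousOn (φk k) I2 := by
    intro k
    have : LipschitzOnWith (Real.toNNReal L) (φk k) I2 := by
      rw [lipschitzOnWith_iff_dist_le_mul]
      intro x hx y hy
      rw [Real.coe_toNNReal L hL0.le]
      exact (hbilip k x hx y hy).2
    exact this.continuousOn
  -- continuity of φ on I2
  have hφcont : ContinuousOn φ I2 :=
    hconv.continuousOn (Eventually.of_forall hkcont).frequently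
  -- pointwise convergence
  have hptw : ∀ x ∈ I2, Tendsto (fun k => φk k x) atTop (𝓝 (φ x)) :=
    fun x hx => hconv.tendsto_at hx
  -- φ is bi-Lipschitz on I2
  have hφbi : ∀ x ∈ I2, ∀ y ∈ I2,
      (1 / L) * dist x y ≤ dist (φ x) (φ y) ∧ dist (φ x) (φ y) ≤ L * dist x y := by
    intro x hx y hy
    have hd : Tendsto (fun k => dist (φk k x) (φk k y)) atTop (𝓝 (dist (φ x) (φ y))) :=
      (hptw x hx).dist (hptw y hy)
    constructor
    · exact ge_of_tendsto hd (Eventually.of_forall fun k => (hbilip k x hx y hy).1)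
    · exact le_of_tendsto hd (Eventually.of_forall fun k => (hbilip k x hx y hy).2)
  -- restrictions to the closed ball U
  set U := Metric.closedBall z r with hU_def
  have hφcU : ContinuousOn φ U := hφcont.mono hU
  have hφlowU : ∀ x ∈ U, ∀ y ∈ U, (1 / L) * dist x y ≤ dist (φ x) (φ y) :=
    fun x hx y hy => (hφbi x (hU hx) y (hU hy)).1
  have hφinjU : Set.InjOn φ U := by
    intro x hx y hy heq
    have h1 := hφlowU x hx y hy
    rw [heq, dist_self] at h1
    have hL' : (0:ℝ) < 1 / L := by positivity
    have : dist x y ≤ 0 := by nlinarith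
    exact dist_le_zero.1 this
  -- the frontier inclusion
  have hfront : ∀ s ∈ sphere z r, φ s ∈ frontier (φ '' U) :=
    image_sphere_subset_frontier L hL0 z r hr φ hφcU hφlowU
  -- choose k₀
  intro ε hε
  have hconv' := (Metric.tendstoUniformlyOn_iff.1 hconv) (ε / 8) (by positivity)
  obtain ⟨k₀, hk₀⟩ := eventually_atTop.1 hconv'
  refine ⟨k₀, fun k hk => ⟨?_, ?_⟩⟩
  · -- (i) φk(U) ⊆ V^ext_ε
    rintro _ ⟨x, hx, rfl⟩
    have h1 : dist (φ x) (φk k x) < ε / 8 := hk₀ k hk x (hU hx)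
    have h2 : infDist (φk k x) (φ '' U) ≤ dist (φk k x) (φ x) :=
      infDist_le_dist_of_mem ⟨x, hx, rfl⟩
    rw [dist_comm] at h1
    have : infDist (φk k x) (φ '' U) < ε := by linarith
    exact this
  · -- (ii) V^int_ε ⊆ φk(U)
    rintro y ⟨hyim, hyfar⟩
    obtain ⟨u, huU, hyu⟩ := hyim
    -- u is in the open ball
    have hunotS : u ∉ sphere z r := by
      intro huS
      have : y ∈ frontier (φ '' U) := hyu ▸ hfront u huS
      have := infDist_zero_of_mem this
      rw [this] at hyfar
      linarith
    have huball : u ∈ ball z r := by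
      rw [mem_ball]
      rcases lt_or_eq_of_le (mem_closedBall.1 huU) with h | h
      · exact h
      · exact absurd (mem_sphere.2 h) hunotS
    -- apply the core theorem
    have hkey := core_surj z r hr φ (φk k) hφcU hφinjU ((hkcont k).mono hU) u huball ?_
    · rw [hyu] at hkey
      exact hkey
    · intro s hsS
      have hsU : s ∈ U := sphere_subset_closedBall hsS
      have h1 : dist (φ s) (φk k s) < ε / 8 := hk₀ k hk s (hU hsU)
      have h2 : ε < dist y (φ s) := by
        calc ε < infDist y (frontier (φ '' U)) := hyfar
          _ ≤ dist y (φ s) := infDist_le_dist_of_mem (hfront s hsS)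
      rw [← hyu] at h2
      rw [dist_comm] at h1
      linarith
end
end

section
/- Let φ : I² → [a, b] be continuous with 0 < a < b, let ε > 0, let C_ε ⊂ I² be a connected component of φ⁻¹((a, a+ε)), let S_ε ⊂ C_ε be a closed square, and let ρ_ε : S_ε → [a, a+ε] be continuous with sup_{x ∈ S_ε} ρ_ε(x) ≥ sup over C_ε of any continuous extension taking values in [a, a+ε]. Then there exists a continuous function ρ : I² → [a, b] such that ρ = φ on I² \ C_ε, ρ = ρ_ε on S_ε, and ‖ρ − φ‖₀ < ε. -/
open MeasureTheory Set Filter Topology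

noncomputable section

/-- Gluing lemma: given continuous `φ : I² → [a,b]`, a connected component `C_ε` of
`φ⁻¹((a, a+ε))`, a closed square `S_ε ⊆ C_ε` and a continuous
`ρ_ε : S_ε → [a, a+ε]` dominating (on `S_ε`) any continuous extension to `C_ε`
with values in `[a, a+ε]`, there is a continuous `ρ : I² → [a,b]` with `ρ = φ`
off `C_ε`, `ρ = ρ_ε` on `S_ε`, and `‖ρ - φ‖₀ < ε`. -/
theorem exists_glued_density (a b ε : ℝ) (ha : 0 < a) (hab : a < b) (hε : 0 < ε)
    (hεab : ε < b - a)
    (φ : ℝ × ℝ → ℝ) (hφ : ContinuousOn φ I2) (hφrange : ∀ x ∈ I2, φ x ∈ Set.Icc a b)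
    (Cε : Set (ℝ × ℝ)) (hCne : Cε.Nonempty)
    (hCsub : Cε ⊆ I2 ∩ φ ⁻¹' (Set.Ioo a (a + ε)))
    (hCconn : IsPreconnected Cε)
    (hCmax : ∀ D : Set (ℝ × ℝ), Cε ⊆ D → D ⊆ I2 ∩ φ ⁻¹' (Set.Ioo a (a + ε)) →
      IsPreconnected D → D = Cε)
    (Sε : Set (ℝ × ℝ)) (hSsq : ∃ (z : ℝ × ℝ) (l : ℝ), 0 < l ∧
      Sε = Set.Icc z (z.1 + l, z.2 + l))
    (hSC : Sε ⊆ Cε)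
    (ρε : ℝ × ℝ → ℝ) (hρε : ContinuousOn ρε Sε)
    (hρεrange : ∀ x ∈ Sε, ρε x ∈ Set.Icc a (a + ε))
    (hsup : ∀ ρhat : ℝ × ℝ → ℝ, ContinuousOn ρhat Cε →
      (∀ x ∈ Cε, ρhat x ∈ Set.Icc a (a + ε)) → (∀ x ∈ Sε, ρhat x = ρε x) →
      ∀ x ∈ Cε, ρhat x ≤ sSup (ρε '' Sε)) :
    ∃ ρ : ℝ × ℝ → ℝ, ContinuousOn ρ I2 ∧ (∀ x ∈ I2, ρ x ∈ Set.Icc a b) ∧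
      (∀ x ∈ I2 \ Cε, ρ x = φ x) ∧ (∀ x ∈ Sε, ρ x = ρε x) ∧
      (∀ x ∈ I2, |ρ x - φ x| < ε) := by
  obtain ⟨z, l, hl, hSeq⟩ := hSsq
  -- Step 1: every point of Cε has a ball whose intersection with I2 lies in Cε.
  have hstep : ∀ x ∈ Cε, ∃ r > 0, Metric.ball x r ∩ I2 ⊆ Cε := by
    intro x hx
    have hxI2 : x ∈ I2 := (hCsub hx).1
    have hxφ : φ x ∈ Set.Ioo a (a + ε) := (hCsub hx).2
    have hmem : φ ⁻¹' (Set.Ioo a (a + ε)) ∈ 𝓝[I2] x :=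
      hφ x hxI2 (Ioo_mem_nhds hxφ.1 hxφ.2)
    rw [mem_nhdsWithin] at hmem
    obtain ⟨W, hWopen, hxW, hWsub⟩ := hmem
    obtain ⟨r, hr, hball⟩ := Metric.isOpen_iff.mp hWopen x hxW
    refine ⟨r, hr, ?_⟩
    intro p hp
    have hpU : Metric.ball x r ∩ I2 ⊆ I2 ∩ φ ⁻¹' (Set.Ioo a (a + ε)) := by
      intro q hq
      exact ⟨hq.2, hWsub ⟨hball hq.1, hq.2⟩⟩
    have hconv : Convex ℝ (Metric.ball x r ∩ I2) :=
      (convex_ball x r).inter (convex_Icc _ _)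
    have hxball : x ∈ Metric.ball x r ∩ I2 := ⟨Metric.mem_ball_self hr, hxI2⟩
    have hD : IsPreconnected (Cε ∪ (Metric.ball x r ∩ I2)) :=
      IsPreconnected.union x hx hxball hCconn hconv.isPreconnected
    have hDsub : Cε ∪ (Metric.ball x r ∩ I2) ⊆ I2 ∩ φ ⁻¹' (Set.Ioo a (a + ε)) :=
      union_subset hCsub hpU
    have := hCmax _ subset_union_left hDsub hD
    rw [← this]
    exact Or.inr hp
  -- Step 2: an open set V ⊇ Cε with V ∩ I2 ⊆ Cε.
  set V : Set (ℝ × ℝ) := ⋃₀ {B | IsOpen B ∧ B ∩ I2 ⊆ Cε} with hV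
  have hVopen : IsOpen V := isOpen_sUnion fun B hB => hB.1
  have hVI2 : V ∩ I2 ⊆ Cε := by
    rintro p ⟨⟨B, hB, hpB⟩, hpI⟩
    exact hB.2 ⟨hpB, hpI⟩
  have hCV : Cε ⊆ V := by
    intro x hx
    obtain ⟨r, hr, hsub⟩ := hstep x hx
    exact ⟨Metric.ball x r, ⟨Metric.isOpen_ball, hsub⟩, Metric.mem_ball_self hr⟩
  -- Step 3: Urysohn bump function.
  have hSclosed : IsClosed Sε := hSeq ▸ isClosed_Icc
  have hdisj : Disjoint Vᶜ Sε := by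
    rw [Set.disjoint_left]
    intro p hp hpS
    exact hp (hCV (hSC hpS))
  obtain ⟨u, hu0, hu1, hurange⟩ :=
    exists_continuous_zero_one_of_isClosed (isClosed_compl_iff.mpr hVopen) hSclosed hdisj
  -- Step 4: extension of ρε by projecting onto the square Sε.
  set π : ℝ × ℝ → ℝ × ℝ :=
    fun p => (min (max p.1 z.1) (z.1 + l), min (max p.2 z.2) (z.2 + l)) with hπ
  have hπcont : Continuous π := by fun_prop
  have hπmem : ∀ p, π p ∈ Sε := by
    intro p
    rw [hSeq]
    constructor
    · constructor
      · exact le_min (le_max_right _ _) (by linarith)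
      · exact le_min (le_max_right _ _) (by linarith)
    · exact ⟨min_le_right _ _, min_le_right _ _⟩
  have hπid : ∀ p ∈ Sε, π p = p := by
    intro p hp
    simp only [hSeq, Set.mem_Icc, Prod.le_def] at hp
    obtain ⟨⟨h1, h2⟩, h3, h4⟩ := hp
    have e1 : (p.1 ⊔ z.1) ⊓ (z.1 + l) = p.1 := by
      rw [max_eq_left h1]; exact min_eq_left h3
    have e2 : (p.2 ⊔ z.2) ⊓ (z.2 + l) = p.2 := by
      rw [max_eq_left h2]; exact min_eq_left h4
    simp only [hπ, e1, e2]
  set ρε' : ℝ × ℝ → ℝ := fun p => ρε (π p) with hρε'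
  have hρε'cont : Continuous ρε' :=
    hρε.comp_continuous hπcont hπmem
  have hρε'range : ∀ p, ρε' p ∈ Set.Icc a (a + ε) := fun p => hρεrange _ (hπmem p)
  have hρε'eq : ∀ p ∈ Sε, ρε' p = ρε p := fun p hp => by
    show ρε (π p) = ρε p
    rw [hπid p hp]
  -- Step 5: define ρ and verify.
  refine ⟨fun p => φ p + u p * (ρε' p - φ p), ?_, ?_, ?_, ?_, ?_⟩
  · exact hφ.add (((u.continuous.continuousOn).mul
      ((hρε'cont.continuousOn).sub hφ)))
  · intro x hx
    have hφx := hφrange x hx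
    have hux := hurange x
    have hρx := hρε'range x
    show φ x + u x * (ρε' x - φ x) ∈ Set.Icc a b
    constructor
    · nlinarith [mul_nonneg (by linarith [hux.2] : (0:ℝ) ≤ 1 - u x)
        (by linarith [hφx.1] : (0:ℝ) ≤ φ x - a),
        mul_nonneg hux.1 (by linarith [hρx.1] : (0:ℝ) ≤ ρε' x - a)]
    · nlinarith [mul_nonneg (by linarith [hux.2] : (0:ℝ) ≤ 1 - u x)
        (by linarith [hφx.2] : (0:ℝ) ≤ b - φ x),
        mul_nonneg hux.1 (by linarith [hρx.2] : (0:ℝ) ≤ b - ρε' x)]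
  · intro x hx
    have hxV : x ∈ Vᶜ := fun hxV => hx.2 (hVI2 ⟨hxV, hx.1⟩)
    have h0 : u x = 0 := hu0 hxV
    show φ x + u x * (ρε' x - φ x) = φ x
    rw [h0]; ring
  · intro x hx
    have h1 : u x = 1 := hu1 hx
    show φ x + u x * (ρε' x - φ x) = ρε x
    rw [h1, hρε'eq x hx]
    ring
  · intro x hx
    have hux := hurange x
    have hρx := hρε'range x
    by_cases hxC : x ∈ Cε
    · have hφx : φ x ∈ Set.Ioo a (a + ε) := (hCsub hxC).2
      have habs : |ρε' x - φ x| < ε := by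
        rw [abs_lt]
        constructor
        · linarith [hρx.1, hφx.2]
        · linarith [hρx.2, hφx.1]
      show |φ x + u x * (ρε' x - φ x) - φ x| < ε
      have heq : |φ x + u x * (ρε' x - φ x) - φ x| = u x * |ρε' x - φ x| := by
        rw [show φ x + u x * (ρε' x - φ x) - φ x = u x * (ρε' x - φ x) by ring,
          abs_mul, abs_of_nonneg hux.1]
      rw [heq]
      calc u x * |ρε' x - φ x| ≤ 1 * |ρε' x - φ x| :=
            mul_le_mul_of_nonneg_right hux.2 (abs_nonneg _)
        _ = |ρε' x - φ x| := one_mul _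
        _ < ε := habs
    · have hxV : x ∈ Vᶜ := fun hxV => hxC (hVI2 ⟨hxV, hx⟩)
      have h0 : u x = 0 := hu0 hxV
      show |φ x + u x * (ρε' x - φ x) - φ x| < ε
      rw [h0]
      simpa using hε
end
end
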